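/- There exists a constant C > 0 such that for all positive integers n and d, |f_n(d)| ≤ C · (log log(10 d))² / d, where f_n(d) = (χ(d)/φ(d)) λ(d)/λ(gcd(n,d)). -/

import Mathlib

set_option maxHeartbeats 1000000

noncomputable def chi (d : ℕ) : ℝ := if d % 4 = 1 then 1 else if d % 4 = 3 then -1 else 0

noncomputable def lam (k : ℕ) : ℝ :=
  ∏ p ∈ k.primeFactors.filter (fun p => 2 < p), ((p : ℝ) - 1) / ((p : ℝ) - 2)

noncomputable def f (n d : ℕ) : ℝ :=
  (chi d / (Nat.totient d : ℝ)) * (lam d / lam (Nat.gcd n d))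

open Finset Real

/-- primes below N -/
def Pb (N : ℕ) : Finset ℕ := (Finset.range N).filter Nat.Prime

lemma mem_Pb {p N : ℕ} : p ∈ Pb N ↔ p < N ∧ p.Prime := by
  simp [Pb]

lemma prime_pow_div_dvd_factorial {p n : ℕ} (hp : p.Prime) : p ^ (n / p) ∣ Nat.factorial n := by
  rcases lt_or_ge n p with h | h
  · simp [Nat.div_eq_of_lt h]
  · rw [Nat.Prime.pow_dvd_factorial_iff hp (Nat.lt_succ_self _)]
    have h1 : 1 ∈ Finset.Ico 1 (Nat.log p n + 1) := by
      simp [Nat.succ_le_iff, Nat.log_pos hp.one_lt h]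
    calc n / p = n / p ^ 1 := by rw [pow_one]
    _ ≤ ∑ i ∈ Finset.Ico 1 (Nat.log p n + 1), n / p ^ i :=
        Finset.single_le_sum (f := fun i => n / p ^ i) (fun i _ => Nat.zero_le _) h1

lemma prod_pow_div_dvd_factorial (n : ℕ) :
    (∏ p ∈ Pb (n + 1), p ^ (n / p)) ∣ Nat.factorial n := by
  have hne : ∀ p ∈ Pb (n + 1), p ^ (n / p) ≠ 0 := fun p hp =>
    pow_ne_zero _ (mem_Pb.mp hp).2.pos.ne'
  rw [← Nat.factorization_le_iff_dvd (Finset.prod_ne_zero_iff.mpr hne) n.factorial_ne_zero]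
  rw [Nat.factorization_prod hne]
  intro q
  rw [Finset.sum_apply']
  rcases Decidable.em (q ∈ Pb (n + 1)) with hq | hq
  · have hqp := (mem_Pb.mp hq).2
    have : ∀ p ∈ Pb (n + 1), (Nat.factorization (p ^ (n / p))) q
        = if p = q then n / q else 0 := by
      intro p hp
      have hpp := (mem_Pb.mp hp).2
      rw [hpp.factorization_pow, Finsupp.single_apply]
      split_ifs with h <;> simp [h]
    rw [Finset.sum_congr rfl this, Finset.sum_ite_eq' _ q, if_pos hq]
    exact (Nat.Prime.pow_dvd_iff_le_factorization hqp n.factorial_ne_zero).mp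
      (prime_pow_div_dvd_factorial hqp)
  · refine le_trans (le_of_eq ?_) (Nat.zero_le _)
    refine Finset.sum_eq_zero fun p hp => ?_
    have hpp := (mem_Pb.mp hp).2
    rw [hpp.factorization_pow, Finsupp.single_apply]
    have : p ≠ q := fun h => hq (h ▸ hp)
    simp [this]

noncomputable def W (N : ℕ) : ℝ := ∑ p ∈ Pb N, Real.log p / p
noncomputable def S (N : ℕ) : ℝ := ∑ p ∈ Pb N, (1 : ℝ) / p

lemma theta_le (n : ℕ) : ∑ p ∈ Pb (n + 1), Real.log p ≤ n * Real.log 4 := by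
  have h1 : (primorial n : ℝ) ≤ (4 : ℝ) ^ n := by
    exact_mod_cast Nat.cast_le.mpr (primorial_le_4_pow n)
  have h2 : Real.log (primorial n) ≤ n * Real.log 4 := by
    calc Real.log (primorial n) ≤ Real.log ((4:ℝ)^n) :=
      Real.log_le_log (by exact_mod_cast (primorial_pos n)) h1
    _ = n * Real.log 4 := by rw [Real.log_pow]
  refine le_trans (le_of_eq ?_) h2
  unfold primorial
  rw [Nat.cast_prod, Real.log_prod]
  · rfl
  · intro p hp
    have := (Finset.mem_filter.mp hp).2.pos
    exact_mod_cast this.ne'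

lemma M1 (n : ℕ) (hn : 1 ≤ n) : W (n + 1) ≤ Real.log n + Real.log 4 := by
  have hn0 : (0:ℝ) < n := by exact_mod_cast hn
  have hprodpos : 0 < (∏ p ∈ Pb (n + 1), p ^ (n / p)) :=
    Finset.prod_pos (fun p hp => pow_pos (mem_Pb.mp hp).2.pos _)
  have hfle : (∏ p ∈ Pb (n + 1), p ^ (n / p)) ≤ Nat.factorial n :=
    Nat.le_of_dvd n.factorial_pos (prod_pow_div_dvd_factorial n)
  have hlog1 : Real.log ((∏ p ∈ Pb (n + 1), p ^ (n / p) : ℕ) : ℝ) ≤ n * Real.log n := by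
    have h2 : ((∏ p ∈ Pb (n + 1), p ^ (n / p) : ℕ) : ℝ) ≤ ((n:ℝ) ^ n) := by
      have := le_trans hfle (Nat.factorial_le_pow n)
      exact_mod_cast this
    calc Real.log ((∏ p ∈ Pb (n + 1), p ^ (n / p) : ℕ) : ℝ) ≤ Real.log ((n:ℝ) ^ n) :=
          Real.log_le_log (by exact_mod_cast hprodpos) h2
    _ = n * Real.log n := by rw [Real.log_pow]
  have hexpand : Real.log ((∏ p ∈ Pb (n + 1), p ^ (n / p) : ℕ) : ℝ)
      = ∑ p ∈ Pb (n + 1), (n / p : ℕ) * Real.log p := by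
    rw [Nat.cast_prod, Real.log_prod]
    · apply Finset.sum_congr rfl
      intro p hp
      rw [Nat.cast_pow, Real.log_pow]
    · intro p hp
      have h1 := (mem_Pb.mp hp).2.pos
      positivity
  have hlow : ∀ p ∈ Pb (n + 1), ((n:ℝ) / p - 1) * Real.log p ≤ (n / p : ℕ) * Real.log p := by
    intro p hp
    have hpp := (mem_Pb.mp hp).2
    have hp0 : (0:ℝ) < p := by exact_mod_cast hpp.pos
    have hlp : 0 ≤ Real.log p := Real.log_natCast_nonneg p
    have : (n:ℝ) / p - 1 ≤ (n / p : ℕ) := by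
      rw [div_sub_one hp0.ne', div_le_iff₀ hp0]
      have : n < p * (n / p) + p := by
        conv_lhs => rw [← Nat.div_add_mod n p]
        exact Nat.add_lt_add_left (Nat.mod_lt _ hpp.pos) _
      have := (Nat.cast_lt (α := ℝ)).mpr this
      push_cast at this ⊢
      nlinarith
    exact mul_le_mul_of_nonneg_right this hlp
  have key : ∑ p ∈ Pb (n + 1), ((n:ℝ) / p - 1) * Real.log p ≤ n * Real.log n :=
    le_trans (Finset.sum_le_sum hlow) (le_trans (le_of_eq hexpand.symm) hlog1)
  have expand2 : ∑ p ∈ Pb (n + 1), ((n:ℝ) / p - 1) * Real.log p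
      = n * W (n + 1) - ∑ p ∈ Pb (n + 1), Real.log p := by
    unfold W
    rw [Finset.mul_sum, ← Finset.sum_sub_distrib]
    apply Finset.sum_congr rfl
    intro p hp
    have hp0 : (0:ℝ) < p := by exact_mod_cast (mem_Pb.mp hp).2.pos
    field_simp
  have := theta_le n
  have h3 : n * W (n + 1) ≤ n * Real.log n + n * Real.log 4 := by
    rw [expand2] at key
    linarith
  calc W (n + 1) = (n * W (n + 1)) / n := by field_simp
  _ ≤ (n * Real.log n + n * Real.log 4) / n :=
      div_le_div_of_nonneg_right h3 hn0.le
  _ = Real.log n + Real.log 4 := by field_simp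

lemma W_nonneg (N : ℕ) : 0 ≤ W N := by
  apply Finset.sum_nonneg
  intro p hp
  have := (mem_Pb.mp hp).2.pos
  have : (0:ℝ) ≤ p := by positivity
  exact div_nonneg (Real.log_natCast_nonneg p) this

lemma M1' (N : ℕ) (hN : 2 ≤ N) : W N ≤ Real.log N + Real.log 4 := by
  obtain ⟨n, rfl⟩ : ∃ n, N = n + 1 := ⟨N - 1, by omega⟩
  have hn : 1 ≤ n := by omega
  refine le_trans (M1 n hn) ?_
  have : Real.log n ≤ Real.log (n + 1) := by
    apply Real.log_le_log (by exact_mod_cast hn)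
    push_cast; linarith
  push_cast
  linarith

lemma step_ineq (a b x c M ε : ℝ) (ha : 1 ≤ a) (hab : a < b) (hx0 : 0 ≤ x)
    (hx : x ≤ a + c) (haM : a ≤ M) (hε0 : 0 ≤ ε) (hε1 : ε ≤ 1) :
    x / a + Real.log a - (c + 1) / a + ε / M ≤
      (x + ε * a / M) / b + Real.log b - (c + 1) / b := by
  have ha0 : (0:ℝ) < a := by linarith
  have hb0 : (0:ℝ) < b := by linarith
  have hM0 : (0:ℝ) < M := by linarith
  have hlog : (b - a) / b ≤ Real.log b - Real.log a := by
    have h1 : Real.log (a / b) ≤ a / b - 1 := Real.log_le_sub_one_of_pos (by positivity)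
    rw [Real.log_div ha0.ne' hb0.ne'] at h1
    have e : (b - a) / b = 1 - a / b := by field_simp
    linarith
  -- suffices: x/a - x/b + (c+1)/b - (c+1)/a + ε/M - ε*a/(M*b) ≤ (b-a)/b
  have key : x / a - x / b + (c + 1) / b - (c + 1) / a + ε / M - ε * a / (M * b)
      ≤ (b - a) / b := by
    have e1 : x / a - x / b + (c + 1) / b - (c + 1) / a
        = (x - (c + 1)) * ((b - a) / (a * b)) := by field_simp; ring
    have e2 : ε / M - ε * a / (M * b) = (ε / M) * ((b - a) / b) := by field_simp
    have h1 : (x - (c + 1)) * ((b - a) / (a * b)) ≤ (a - 1) * ((b - a) / (a * b)) := by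
      apply mul_le_mul_of_nonneg_right (by linarith)
      exact div_nonneg (by linarith) (by positivity)
    have h2 : (ε / M) * ((b - a) / b) ≤ (1 / a) * ((b - a) / b) := by
      apply mul_le_mul_of_nonneg_right _ (div_nonneg (by linarith) (by positivity))
      rw [div_le_div_iff₀ hM0 ha0]
      nlinarith
    have h3 : (a - 1) * ((b - a) / (a * b)) + (1 / a) * ((b - a) / b) = (b - a) / b := by
      field_simp; ring
    linarith [e1, e2]
  have expand : x / a + Real.log a - (c + 1) / a + ε / M
      - ((x + ε * a / M) / b + Real.log b - (c + 1) / b)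
      = (x / a - x / b + (c + 1) / b - (c + 1) / a + ε / M - ε * a / (M * b))
        - (Real.log b - Real.log a) := by
    field_simp
    ring
  linarith [expand ▸ (by linarith [key, hlog] : (x / a - x / b + (c + 1) / b - (c + 1) / a + ε / M - ε * a / (M * b)) - (Real.log b - Real.log a) ≤ 0)]

lemma log_three_gt_one : 1 < Real.log 3 := by
  have h : Real.exp 1 < 3 := by
    have := Real.exp_one_lt_d9
    linarith
  calc (1:ℝ) = Real.log (Real.exp 1) := (Real.log_exp 1).symm
  _ < Real.log 3 := Real.log_lt_log (Real.exp_pos 1) h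

noncomputable def Bc : ℝ := 1/2 + (Real.log 4 + 1) / Real.log 3

lemma Pb_three : Pb 3 = {2} := by decide

lemma M2 (N : ℕ) (hN : 3 ≤ N) :
    S N ≤ W N / Real.log N + Real.log (Real.log N) + Bc - (Real.log 4 + 1) / Real.log N := by
  induction N, hN using Nat.le_induction with
  | base =>
    unfold S W Bc
    rw [Pb_three]
    simp only [Finset.sum_singleton]
    have h2 : (0:ℝ) < Real.log 2 := Real.log_pos (by norm_num)
    have h3 : (0:ℝ) < Real.log 3 := by linarith [log_three_gt_one]
    have hll3 : 0 < Real.log (Real.log 3) := Real.log_pos log_three_gt_one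
    have : (0:ℝ) ≤ (Real.log 2 / 2) / Real.log 3 := by positivity
    push_cast
    linarith
  | succ N hN ih =>
    have hN3 : (3:ℝ) ≤ N := by exact_mod_cast hN
    have ha1 : 1 ≤ Real.log N := by
      calc (1:ℝ) ≤ Real.log 3 := log_three_gt_one.le
      _ ≤ Real.log N := Real.log_le_log (by norm_num) hN3
    have hab : Real.log N < Real.log (N + 1) := by
      apply Real.log_lt_log (by linarith)
      linarith
    have haM : Real.log N ≤ (N:ℝ) := Real.log_le_self (by linarith)
    have hWle : W N ≤ Real.log N + Real.log 4 := M1' N (by omega)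
    have hW0 : 0 ≤ W N := W_nonneg N
    have hPb : Pb (N + 1) = if N.Prime then insert N (Pb N) else Pb N := by
      unfold Pb
      rw [Finset.range_add_one, Finset.filter_insert]
    have hNmem : N ∉ Pb N := fun h => absurd (mem_Pb.mp h).1 (lt_irrefl N)
    by_cases hp : N.Prime
    · have hS : S (N + 1) = S N + 1 / N := by
        unfold S; rw [hPb, if_pos hp, Finset.sum_insert hNmem]; ring
      have hW : W (N + 1) = W N + Real.log N / N := by
        unfold W; rw [hPb, if_pos hp, Finset.sum_insert hNmem]; ring
      rw [hS, hW]
      have := step_ineq (Real.log N) (Real.log (N+1)) (W N) (Real.log 4) (N:ℝ) 1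
        ha1 hab hW0 hWle haM (by norm_num) (by norm_num)
      simp only [one_mul] at this ⊢
      push_cast at this ⊢
      linarith [ih, this]
    · have hS : S (N + 1) = S N := by unfold S; rw [hPb, if_neg hp]
      have hW : W (N + 1) = W N := by unfold W; rw [hPb, if_neg hp]
      rw [hS, hW]
      have := step_ineq (Real.log N) (Real.log (N+1)) (W N) (Real.log 4) (N:ℝ) 0
        ha1 hab hW0 hWle haM (by norm_num) (by norm_num)
      simp only [zero_mul, zero_div, add_zero, zero_mul, mul_zero] at this
      push_cast at this ⊢
      linarith [ih, this]

noncomputable def Bc' : ℝ := Bc + 1 + Real.log 4 / Real.log 3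

lemma mertens (N : ℕ) (hN : 3 ≤ N) : S N ≤ Real.log (Real.log N) + Bc' := by
  have h3 : (0:ℝ) < Real.log 3 := by linarith [log_three_gt_one]
  have hN3 : (3:ℝ) ≤ N := by exact_mod_cast hN
  have hlN : Real.log 3 ≤ Real.log N := Real.log_le_log (by norm_num) hN3
  have hlN0 : (0:ℝ) < Real.log N := by linarith
  have hW : W N / Real.log N ≤ 1 + Real.log 4 / Real.log 3 := by
    have h1 : W N / Real.log N ≤ (Real.log N + Real.log 4) / Real.log N :=
      div_le_div_of_nonneg_right (M1' N (by omega)) hlN0.le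
    have h4 : (0:ℝ) ≤ Real.log 4 := Real.log_nonneg (by norm_num)
    have h2 : (Real.log N + Real.log 4) / Real.log N = 1 + Real.log 4 / Real.log N := by
      field_simp
    rw [h2] at h1
    have h5 : Real.log 4 / Real.log N ≤ Real.log 4 / Real.log 3 :=
      div_le_div_of_nonneg_left h4 h3 hlN
    linarith
  have hlast : (0:ℝ) ≤ (Real.log 4 + 1) / Real.log N := by positivity
  have := M2 N hN
  unfold Bc'
  linarith

lemma telescope (K : ℕ) : ∑ k ∈ Finset.Ico 3 (K + 1), (4:ℝ) / (((k:ℝ) - 2) * ((k:ℝ) - 1)) ≤ 4 := by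
  set f : ℕ → ℝ := fun i => 4 / ((i:ℝ) + 1) with hf
  rw [Finset.sum_Ico_eq_sum_range]
  have hcong : ∀ j ∈ Finset.range (K + 1 - 3),
      (4:ℝ) / ((((3 + j : ℕ):ℝ) - 2) * (((3 + j : ℕ):ℝ) - 1)) = f j - f (j + 1) := by
    intro j _
    simp only [hf]
    have h1 : ((j:ℝ) + 1) ≠ 0 := by positivity
    have h2 : ((j:ℝ) + 2) ≠ 0 := by positivity
    push_cast
    have e1 : (3:ℝ) + (j:ℝ) - 2 = (j:ℝ) + 1 := by ring
    have e2 : (3:ℝ) + (j:ℝ) - 1 = (j:ℝ) + 2 := by ring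
    have e3 : (j:ℝ) + 1 + 1 = (j:ℝ) + 2 := by ring
    rw [e1, e2, e3, div_sub_div _ _ h1 h2, div_eq_div_iff (by positivity) (by positivity)]
    ring
  rw [Finset.sum_congr rfl hcong, Finset.sum_range_sub' f]
  have h0 : f 0 = 4 := by simp [hf]
  have h1 : 0 ≤ f (K + 1 - 3) := by positivity
  linarith

lemma head_bound (K : ℕ) (hK : 2 ≤ K) :
    ∑ p ∈ (Pb (K + 1)).filter (fun p => 2 < p), 2 / ((p:ℝ) - 2)
      ≤ 2 * (Real.log (Real.log (K + 1)) + Bc') + 4 := by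
  have hterm : ∀ p ∈ (Pb (K + 1)).filter (fun p => 2 < p),
      2 / ((p:ℝ) - 2) ≤ 2 / p + 4 / (((p:ℝ) - 2) * ((p:ℝ) - 1)) := by
    intro p hp
    obtain ⟨hp1, hp2⟩ := Finset.mem_filter.mp hp
    have h3 : (3:ℝ) ≤ p := by exact_mod_cast hp2
    have hp0 : (0:ℝ) < p := by linarith
    have hq : (0:ℝ) < ((p:ℝ) - 2) * ((p:ℝ) - 1) := by nlinarith
    have hpq : (0:ℝ) < (p:ℝ) * (((p:ℝ) - 2) * ((p:ℝ) - 1)) := mul_pos hp0 hq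
    rw [div_add_div _ _ hp0.ne' hq.ne', div_le_div_iff₀ (by linarith) hpq]
    nlinarith
  refine le_trans (Finset.sum_le_sum hterm) ?_
  rw [Finset.sum_add_distrib]
  have h1 : ∑ p ∈ (Pb (K + 1)).filter (fun p => 2 < p), 2 / (p:ℝ)
      ≤ 2 * (Real.log (Real.log (K + 1)) + Bc') := by
    have hsub : ∑ p ∈ (Pb (K + 1)).filter (fun p => 2 < p), 2 / (p:ℝ)
        ≤ ∑ p ∈ Pb (K + 1), 2 / (p:ℝ) := by
      apply Finset.sum_le_sum_of_subset_of_nonneg (Finset.filter_subset _ _)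
      intro p hp _
      have := (mem_Pb.mp hp).2.pos
      positivity
    refine le_trans hsub ?_
    have : ∑ p ∈ Pb (K + 1), 2 / (p:ℝ) = 2 * S (K + 1) := by
      unfold S; rw [Finset.mul_sum]; apply Finset.sum_congr rfl; intro p _; ring
    rw [this]
    have hm := mertens (K + 1) (by omega)
    have : ((K + 1 : ℕ):ℝ) = (K:ℝ) + 1 := by push_cast; ring
    rw [this] at hm
    linarith
  have h2 : ∑ p ∈ (Pb (K + 1)).filter (fun p => 2 < p), 4 / (((p:ℝ) - 2) * ((p:ℝ) - 1)) ≤ 4 := by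
    have hsub : (Pb (K + 1)).filter (fun p => 2 < p) ⊆ Finset.Ico 3 (K + 1) := by
      intro p hp
      obtain ⟨hp1, hp2⟩ := Finset.mem_filter.mp hp
      rw [Finset.mem_Ico]
      exact ⟨hp2, (mem_Pb.mp hp1).1⟩
    refine le_trans (Finset.sum_le_sum_of_subset_of_nonneg hsub ?_) (telescope K)
    intro k hk _
    have h3 : 3 ≤ k := (Finset.mem_Ico.mp hk).1
    have h3' : (3:ℝ) ≤ k := by exact_mod_cast h3
    have : (0:ℝ) < ((k:ℝ) - 2) * ((k:ℝ) - 1) := by nlinarith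
    positivity
  linarith

noncomputable def Fp (d : ℕ) : ℝ :=
  ∏ p ∈ d.primeFactors.filter (fun p => 2 < p), (p:ℝ) / ((p:ℝ) - 2)

lemma Fp_bound (d : ℕ) (hd : 0 < d) :
    Fp d ≤ Real.exp (2 * Real.log 3 + 2 * Bc' + 6) * (Real.log (Real.log (10 * d)))^2 := by
  set L : ℝ := Real.log (10 * d) with hLdef
  set l : ℝ := Real.log L with hldef
  have hd1 : (1:ℝ) ≤ d := by exact_mod_cast hd
  have h10d : (10:ℝ) ≤ 10 * d := by linarith
  have hL2 : 2 ≤ L := by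
    rw [hLdef, Real.le_log_iff_exp_le (by linarith)]
    have h1 := Real.exp_one_lt_d9
    have h2 : Real.exp 2 = Real.exp 1 * Real.exp 1 := by
      rw [← Real.exp_add]; norm_num
    nlinarith [Real.exp_pos 1]
  have hl2 : Real.log 2 ≤ l := Real.log_le_log two_pos hL2
  have hlhalf : (1/2 : ℝ) ≤ l := by
    have := Real.log_two_gt_d9
    linarith
  have hl0 : 0 < l := by linarith
  obtain ⟨K, hKL, hKu⟩ : ∃ K : ℕ, L^2 ≤ (K:ℝ) ∧ (K:ℝ) < L^2 + 1 :=
    ⟨⌈L^2⌉₊, Nat.le_ceil _, Nat.ceil_lt_add_one (by positivity)⟩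
  have hL24 : (4:ℝ) ≤ L^2 := by nlinarith
  have hK4 : 4 ≤ K := by exact_mod_cast le_trans hL24 hKL
  set Sd := d.primeFactors.filter (fun p => 2 < p) with hSdef
  have hSdmem : ∀ p ∈ Sd, p.Prime ∧ 2 < p := by
    intro p hp
    obtain ⟨h1, h2⟩ := Finset.mem_filter.mp hp
    exact ⟨Nat.prime_of_mem_primeFactors h1, h2⟩
  have hp3 : ∀ p ∈ Sd, (3:ℝ) ≤ p := by
    intro p hp
    have := (hSdmem p hp).2
    exact_mod_cast this
  -- step 1 : Fp d ≤ exp (sum)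
  have h1 : Fp d ≤ Real.exp (∑ p ∈ Sd, 2 / ((p:ℝ) - 2)) := by
    rw [Real.exp_sum]
    apply Finset.prod_le_prod
    · intro p hp
      have := hp3 p hp
      exact div_nonneg (by linarith) (by linarith)
    · intro p hp
      have h3 := hp3 p hp
      have hne : (p:ℝ) - 2 ≠ 0 := by linarith
      have heq : (p:ℝ) / ((p:ℝ) - 2) = 2 / ((p:ℝ) - 2) + 1 := by
        field_simp; ring
      rw [heq]
      exact Real.add_one_le_exp _
  -- split
  have hsplit : ∑ p ∈ Sd, 2 / ((p:ℝ) - 2)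
      = ∑ p ∈ Sd.filter (fun p => p ≤ K), 2 / ((p:ℝ) - 2)
        + ∑ p ∈ Sd.filter (fun p => ¬ p ≤ K), 2 / ((p:ℝ) - 2) :=
    (Finset.sum_filter_add_sum_filter_not Sd _ _).symm
  -- head
  have hhead : ∑ p ∈ Sd.filter (fun p => p ≤ K), 2 / ((p:ℝ) - 2)
      ≤ 2 * (Real.log (Real.log (K + 1)) + Bc') + 4 := by
    refine le_trans (Finset.sum_le_sum_of_subset_of_nonneg ?_ ?_) (head_bound K (by omega))
    · intro p hp
      obtain ⟨hp1, hp2⟩ := Finset.mem_filter.mp hp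
      obtain ⟨hpp, hgt⟩ := hSdmem p hp1
      exact Finset.mem_filter.mpr ⟨mem_Pb.mpr ⟨by omega, hpp⟩, hgt⟩
    · intro p hp _
      obtain ⟨hp1, hp2⟩ := Finset.mem_filter.mp hp
      have : (3:ℝ) ≤ p := by exact_mod_cast hp2
      exact div_nonneg (by norm_num) (by linarith)
  have hloglogK : Real.log (Real.log (K + 1)) ≤ Real.log 3 + Real.log l := by
    have hK1 : (K:ℝ) + 1 ≤ 2 * L^2 := by nlinarith
    have hlogK : Real.log ((K:ℝ) + 1) ≤ Real.log 2 + 2 * l := by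
      calc Real.log ((K:ℝ) + 1) ≤ Real.log (2 * L^2) := by
            apply Real.log_le_log (by positivity) hK1
      _ = Real.log 2 + 2 * l := by
          rw [Real.log_mul (by norm_num) (by positivity), Real.log_pow]
          push_cast; ring
    have hlogK3 : Real.log ((K:ℝ) + 1) ≤ 3 * l := by linarith
    have hlogKpos : 0 < Real.log ((K:ℝ) + 1) := by
      apply Real.log_pos
      have : (4:ℝ) ≤ K := by exact_mod_cast hK4
      linarith
    calc Real.log (Real.log ((K:ℝ) + 1)) ≤ Real.log (3 * l) :=
          Real.log_le_log hlogKpos (by linarith)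
    _ = Real.log 3 + Real.log l := Real.log_mul (by norm_num) hl0.ne'
  -- tail
  have htail : ∑ p ∈ Sd.filter (fun p => ¬ p ≤ K), 2 / ((p:ℝ) - 2) ≤ 2 := by
    set St := Sd.filter (fun p => ¬ p ≤ K) with hStdef
    set t := St.card with htdef
    have hmem : ∀ p ∈ St, K + 1 ≤ p := by
      intro p hp
      have := (Finset.mem_filter.mp hp).2
      omega
    have hdvd : (∏ p ∈ St, p) ∣ d := by
      refine dvd_trans (Finset.prod_dvd_prod_of_subset _ _ _ ?_) (Nat.prod_primeFactors_dvd d)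
      exact subset_trans (Finset.filter_subset _ _) (Finset.filter_subset _ _)
    have hpow : (K + 1) ^ t ≤ d := by
      refine le_trans ?_ (Nat.le_of_dvd hd hdvd)
      exact Finset.pow_card_le_prod St _ _ hmem
    have hlogpow : (t:ℝ) * Real.log ((K:ℝ) + 1) ≤ L := by
      have h1 : (((K + 1) ^ t : ℕ) : ℝ) ≤ (d:ℝ) := by exact_mod_cast hpow
      have h2 : Real.log (((K:ℝ) + 1) ^ t) ≤ Real.log d := by
        apply Real.log_le_log (by positivity)
        push_cast at h1 ⊢
        exact h1
      rw [Real.log_pow] at h2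
      have h3 : Real.log d ≤ L := by
        rw [hLdef]
        apply Real.log_le_log (by linarith) (by linarith)
      linarith
    have hlogK2 : 2 * l ≤ Real.log ((K:ℝ) + 1) := by
      have : L^2 ≤ (K:ℝ) + 1 := by linarith
      calc 2 * l = Real.log (L^2) := by rw [Real.log_pow]; push_cast; ring
      _ ≤ Real.log ((K:ℝ) + 1) := Real.log_le_log (by positivity) this
    have ht : (t:ℝ) * (2 * l) ≤ L := by
      have h0 : (0:ℝ) ≤ t := Nat.cast_nonneg t
      nlinarith [hlogpow, hlogK2]
    have hterm : ∀ p ∈ St, 2 / ((p:ℝ) - 2) ≤ 2 / (L^2 - 1) := by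
      intro p hp
      have h1 : K + 1 ≤ p := hmem p hp
      have h2 : (K:ℝ) + 1 ≤ p := by exact_mod_cast h1
      have h3 : L^2 - 1 ≤ (p:ℝ) - 2 := by nlinarith
      apply div_le_div_of_nonneg_left (by norm_num) (by nlinarith) h3
    calc ∑ p ∈ St, 2 / ((p:ℝ) - 2) ≤ St.card • (2 / (L^2 - 1)) :=
          Finset.sum_le_card_nsmul St _ _ hterm
    _ = (t:ℝ) * (2 / (L^2 - 1)) := by rw [nsmul_eq_mul]
    _ ≤ 2 := by
        have hL21 : (0:ℝ) < L^2 - 1 := by nlinarith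
        rw [mul_div_assoc'] at *
        rw [div_le_iff₀ hL21]
        nlinarith [ht]
  -- combine
  have htotal : ∑ p ∈ Sd, 2 / ((p:ℝ) - 2)
      ≤ 2 * Real.log l + (2 * Real.log 3 + 2 * Bc' + 6) := by
    rw [hsplit]
    have : Real.log (Real.log ((K:ℝ) + 1)) ≤ Real.log 3 + Real.log l := hloglogK
    linarith [hhead, htail, hloglogK]
  have hexp : Real.exp (2 * Real.log l + (2 * Real.log 3 + 2 * Bc' + 6))
      = Real.exp (2 * Real.log 3 + 2 * Bc' + 6) * l^2 := by
    rw [Real.exp_add]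
    have : Real.exp (2 * Real.log l) = l^2 := by
      rw [two_mul, Real.exp_add, Real.exp_log hl0]
      ring
    rw [this]
    ring
  calc Fp d ≤ Real.exp (∑ p ∈ Sd, 2 / ((p:ℝ) - 2)) := h1
  _ ≤ Real.exp (2 * Real.log l + (2 * Real.log 3 + 2 * Bc' + 6)) := Real.exp_le_exp.mpr htotal
  _ = Real.exp (2 * Real.log 3 + 2 * Bc' + 6) * l^2 := hexp
  _ = Real.exp (2 * Real.log 3 + 2 * Bc' + 6) * (Real.log (Real.log (10 * d)))^2 := by
      rw [hldef, hLdef]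


lemma abs_chi_le (d : ℕ) : |chi d| ≤ 1 := by
  unfold chi; split_ifs <;> norm_num

lemma chi_even (d : ℕ) (h : d % 2 = 0) : chi d = 0 := by
  have h4 : d % 4 % 2 = d % 2 := Nat.mod_mod_of_dvd d ⟨2, rfl⟩
  unfold chi
  rw [if_neg (by omega), if_neg (by omega)]

lemma mem_lam_filter {k p : ℕ} (hp : p ∈ k.primeFactors.filter (fun p => 2 < p)) :
    (3:ℝ) ≤ (p:ℝ) := by
  have := (Finset.mem_filter.mp hp).2
  exact_mod_cast this

lemma one_le_lam (k : ℕ) : 1 ≤ lam k := by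
  unfold lam
  calc (1:ℝ) = ∏ _p ∈ k.primeFactors.filter (fun p => 2 < p), (1:ℝ) :=
        (Finset.prod_const_one).symm
  _ ≤ ∏ p ∈ k.primeFactors.filter (fun p => 2 < p), ((p : ℝ) - 1) / ((p : ℝ) - 2) := by
      apply Finset.prod_le_prod
      · intro p hp; norm_num
      · intro p hp
        have h3 := mem_lam_filter hp
        rw [le_div_iff₀ (by linarith)]
        linarith

lemma lam_pos (k : ℕ) : 0 < lam k := lt_of_lt_of_le one_pos (one_le_lam k)

lemma primeFactors_filter_of_odd {d : ℕ} (hd : d % 2 = 1) :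
    d.primeFactors.filter (fun p => 2 < p) = d.primeFactors := by
  apply Finset.filter_true_of_mem
  intro p hp
  have hpp := Nat.prime_of_mem_primeFactors hp
  have hdvd := Nat.dvd_of_mem_primeFactors hp
  have h2 : p ≠ 2 := by
    rintro rfl
    obtain ⟨k, rfl⟩ := hdvd
    omega
  exact lt_of_le_of_ne hpp.two_le (Ne.symm h2)

lemma lam_div_totient {d : ℕ} (hd : 0 < d) (hodd : d % 2 = 1) :
    lam d / (Nat.totient d : ℝ) = Fp d / d := by
  have hφ : 0 < Nat.totient d := Nat.totient_pos.mpr hd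
  have hfilter := primeFactors_filter_of_odd hodd
  have hcast : ((Nat.totient d : ℕ):ℝ) * ∏ p ∈ d.primeFactors, (p:ℝ)
      = (d:ℝ) * ∏ p ∈ d.primeFactors, ((p:ℝ) - 1) := by
    have := Nat.totient_mul_prod_primeFactors d
    have hc := congrArg (fun x : ℕ => (x:ℝ)) this
    push_cast at hc
    rw [hc]
    apply congrArg
    apply Finset.prod_congr rfl
    intro p hp
    have h1 := (Nat.prime_of_mem_primeFactors hp).one_lt
    rw [Nat.cast_sub h1.le]
    norm_num
  have hprodne : (∏ p ∈ d.primeFactors, (p:ℝ)) ≠ 0 := by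
    apply Finset.prod_ne_zero_iff.mpr
    intro p hp
    have := (Nat.prime_of_mem_primeFactors hp).pos
    positivity
  have hprod : lam d * ∏ p ∈ d.primeFactors, (p:ℝ)
      = Fp d * ∏ p ∈ d.primeFactors, ((p:ℝ) - 1) := by
    unfold lam Fp
    rw [hfilter, ← Finset.prod_mul_distrib, ← Finset.prod_mul_distrib]
    apply Finset.prod_congr rfl
    intro p hp
    ring
  have hd0 : (d:ℝ) ≠ 0 := by positivity
  have hφ0 : ((Nat.totient d : ℕ):ℝ) ≠ 0 := by
    have : (0:ℝ) < Nat.totient d := by exact_mod_cast hφ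
    linarith
  rw [div_eq_div_iff hφ0 hd0]
  -- lam d * d = Fp d * φ d
  apply mul_right_cancel₀ hprodne
  calc lam d * (d:ℝ) * ∏ p ∈ d.primeFactors, (p:ℝ)
      = (d:ℝ) * (lam d * ∏ p ∈ d.primeFactors, (p:ℝ)) := by ring
  _ = (d:ℝ) * (Fp d * ∏ p ∈ d.primeFactors, ((p:ℝ) - 1)) := by rw [hprod]
  _ = Fp d * ((d:ℝ) * ∏ p ∈ d.primeFactors, ((p:ℝ) - 1)) := by ring
  _ = Fp d * (((Nat.totient d : ℕ):ℝ) * ∏ p ∈ d.primeFactors, (p:ℝ)) := by rw [hcast]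
  _ = Fp d * ((Nat.totient d : ℕ):ℝ) * ∏ p ∈ d.primeFactors, (p:ℝ) := by ring

/-- Uniformly in `n`, `|f_n(d)| ≪ (log log (10 d))² / d`. -/
theorem f_bound :
    ∃ C > 0, ∀ n d : ℕ, 0 < n → 0 < d →
      |f n d| ≤ C * (Real.log (Real.log (10 * d))) ^ 2 / d := by
  refine ⟨Real.exp (2 * Real.log 3 + 2 * Bc' + 6), Real.exp_pos _, ?_⟩
  set C := Real.exp (2 * Real.log 3 + 2 * Bc' + 6) with hC
  intro n d hn hd
  have hd0 : (0:ℝ) < d := by exact_mod_cast hd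
  have hRHS : 0 ≤ C * (Real.log (Real.log (10 * d))) ^ 2 / d :=
    div_nonneg (mul_nonneg (Real.exp_pos _).le (sq_nonneg _)) hd0.le
  rcases Nat.even_or_odd d with he | ho
  · have h2 : d % 2 = 0 := Nat.even_iff.mp he
    have : f n d = 0 := by
      unfold f
      rw [chi_even d h2]
      simp
    rw [this, abs_zero]
    exact hRHS
  · have h2 : d % 2 = 1 := Nat.odd_iff.mp ho
    have hφ : 0 < Nat.totient d := Nat.totient_pos.mpr hd
    have hφ0 : (0:ℝ) < (Nat.totient d : ℝ) := by exact_mod_cast hφ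
    have hlamd := lam_pos d
    have hlamg := one_le_lam (Nat.gcd n d)
    have hlamgpos := lam_pos (Nat.gcd n d)
    have habs : |f n d| = |chi d| / (Nat.totient d : ℝ) * (lam d / lam (Nat.gcd n d)) := by
      unfold f
      rw [abs_mul, abs_div, Nat.abs_cast, abs_of_pos (div_pos hlamd hlamgpos)]
    have hstep1 : |f n d| ≤ lam d / (Nat.totient d : ℝ) := by
      rw [habs]
      have h1 : |chi d| / (Nat.totient d : ℝ) ≤ 1 / (Nat.totient d : ℝ) :=
        div_le_div_of_nonneg_right (abs_chi_le d) hφ0.le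
      calc |chi d| / (Nat.totient d : ℝ) * (lam d / lam (Nat.gcd n d))
          ≤ 1 / (Nat.totient d : ℝ) * lam d := by
            apply mul_le_mul h1 (div_le_self hlamd.le hlamg) (by positivity) (by positivity)
      _ = lam d / (Nat.totient d : ℝ) := by ring
    have hstep2 : lam d / (Nat.totient d : ℝ) = Fp d / d := lam_div_totient hd h2
    have hstep3 : Fp d / (d:ℝ) ≤ C * (Real.log (Real.log (10 * d))) ^ 2 / d :=
      div_le_div_of_nonneg_right (Fp_bound d hd) hd0.le
    calc |f n d| ≤ lam d / (Nat.totient d : ℝ) := hstep1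
    _ = Fp d / d := hstep2
    _ ≤ C * (Real.log (Real.log (10 * d))) ^ 2 / d := hstep3
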